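/- Let n be an odd positive integer having no divisor congruent to 3 modulo 4, and suppose n has a divisor δ such that δ + 1 ≡ 0 (mod m) for some positive integer m with m ≡ 3 (mod 4). Then there exist pairwise distinct positive integers x₁, x₂, x₃ such that 4/n = 1/x₁ + 1/x₂ + 1/x₃. -/

import Mathlib

theorem stmt_14 (n : ℕ) (hn : 0 < n) (hodd : Odd n)
    (hnodiv : ∀ m : ℕ, m ∣ n → m % 4 ≠ 3)
    (h : ∃ δ : ℕ, δ ∣ n ∧ ∃ m : ℕ, 0 < m ∧ m % 4 = 3 ∧ m ∣ δ + 1) :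
    ∃ x₁ x₂ x₃ : ℕ, 0 < x₁ ∧ 0 < x₂ ∧ 0 < x₃ ∧
      x₁ ≠ x₂ ∧ x₂ ≠ x₃ ∧ x₁ ≠ x₃ ∧
      (4 : ℚ) / n = 1 / x₁ + 1 / x₂ + 1 / x₃ := by
  obtain ⟨δ, hδn, m, hm0, hm3, t, ht⟩ := h
  obtain ⟨e, he⟩ := hδn
  have hmodd : m % 2 = 1 := Nat.odd_of_mod_four_eq_three hm3
  have hδ2 : δ % 2 = 1 := Nat.odd_iff.mp (hodd.of_dvd_nat ⟨e, he⟩)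
  have hmt : m * t % 2 = t % 2 := by
    rw [Nat.mul_mod, hmodd, one_mul, Nat.mod_mod_of_dvd t dvd_rfl]
  have ht0 : t ≠ 0 := by rintro rfl; simp at ht
  have hteven : t % 2 = 0 := by omega
  have ht2 : 2 ≤ t := by omega
  have hm3' : 3 ≤ m := by omega
  have hδ5 : 5 ≤ δ := by nlinarith
  obtain ⟨s, hs⟩ : ∃ s, m + 1 = 4 * s := ⟨(m + 1) / 4, by omega⟩
  have hs0 : 0 < s := by omega
  have he0 : 0 < e := by
    rcases Nat.eq_zero_or_pos e with h0 | h0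
    · subst h0; simp at he; omega
    · exact h0
  have hδ0 : 0 < δ := by omega
  have ht0' : 0 < t := by omega
  -- key numeric identity: δ + t + 1 = 4 * s * t
  have key : δ + t + 1 = 4 * s * t := by
    have h1 : δ + t + 1 = (m + 1) * t := by rw [add_mul, one_mul, ← ht]; ring
    rw [h1, hs]
  refine ⟨s * t * e, n * s, n * s * t, by positivity, by positivity, by positivity, ?_, ?_, ?_, ?_⟩
  · rw [he]
    intro hc
    have h1 : s * e * t = s * e * δ := by ring_nf; ring_nf at hc; linarith
    have : t = δ := Nat.eq_of_mul_eq_mul_left (by positivity) h1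
    nlinarith
  · intro hc
    have : t = 1 := by
      nth_rewrite 1 [show n * s = n * s * 1 by ring] at hc
      exact (Nat.eq_of_mul_eq_mul_left (by positivity) hc).symm
    omega
  · rw [he]
    intro hc
    have h1 : (s * t * e) * 1 = (s * t * e) * δ := by ring_nf; ring_nf at hc; linarith
    have : 1 = δ := Nat.eq_of_mul_eq_mul_left (by positivity) h1
    omega
  · have hnQ : (n : ℚ) = δ * e := by exact_mod_cast congrArg Nat.cast he
    have keyQ : (δ : ℚ) + t + 1 = 4 * s * t := by exact_mod_cast congrArg Nat.cast key
    have hs0' : (s : ℚ) ≠ 0 := by positivity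
    have ht0'' : (t : ℚ) ≠ 0 := by positivity
    have he0' : (e : ℚ) ≠ 0 := by positivity
    have hδ0' : (δ : ℚ) ≠ 0 := by positivity
    push_cast
    rw [hnQ]
    field_simp
    ring_nf
    linear_combination (-1 : ℚ) * keyQ
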